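/- Let K be a 3DM instance and σ(K) the associated spanUFP instance. In any feasible solution of σ(K), at most 8 of the selected tasks have their schedule contained in any single block I. -/

import Mathlib

/-- `ρ = max {29, 3q}`. -/
def rho (q : ℕ) : ℕ := max 29 (3 * q)

/-- The number `x'_i = iρ + 1` associated to the node `x_i`. -/
def xnum (q i : ℕ) : ℤ := (i : ℤ) * (rho q : ℤ) + 1

/-- The number `y'_j = jρ² + 2` associated to the node `y_j`. -/
def ynum (q j : ℕ) : ℤ := (j : ℤ) * (rho q : ℤ) ^ 2 + 2

/-- The number `z'_k = kρ³ + 4` associated to the node `z_k`. -/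
def znum (q k : ℕ) : ℤ := (k : ℤ) * (rho q : ℤ) ^ 3 + 4

/-- The number `h'_ℓ = -iρ - jρ² - kρ³ - 7` associated to the hyperedge `h_ℓ = (x_i, y_j, z_k)`. -/
def hnum (q : ℕ) (h : ℕ × ℕ × ℕ) : ℤ :=
  -((h.1 : ℤ) * (rho q : ℤ)) - (h.2.1 : ℤ) * (rho q : ℤ) ^ 2 - (h.2.2 : ℤ) * (rho q : ℤ) ^ 3 - 7

/-- The set `Q(K)` of the `3q + m` integers associated to a 3DM instance `K = (q, E)`. -/
def QK (q : ℕ) (E : Finset (ℕ × ℕ × ℕ)) : Finset ℤ :=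
  ((Finset.Icc 1 q).image (xnum q)) ∪ ((Finset.Icc 1 q).image (ynum q)) ∪
    ((Finset.Icc 1 q).image (znum q)) ∪ (E.image (hnum q))

/-- `(q, E)` is a 3DM instance: every hyperedge is a triple of node indices in `{1, …, q}`
(`X`, `Y` and `Z` are identified with `{1, …, q}`). -/
def ValidE (q : ℕ) (E : Finset (ℕ × ℕ × ℕ)) : Prop :=
  ∀ h ∈ E, h.1 ∈ Finset.Icc 1 q ∧ h.2.1 ∈ Finset.Icc 1 q ∧ h.2.2 ∈ Finset.Icc 1 q

/-- A hypermatching: no two distinct hyperedges share a node. -/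
def Matching (M : Finset (ℕ × ℕ × ℕ)) : Prop :=
  ∀ h ∈ M, ∀ h' ∈ M, h ≠ h' → h.1 ≠ h'.1 ∧ h.2.1 ≠ h'.2.1 ∧ h.2.2 ≠ h'.2.2

/-- `μ = 1 + max_{u' ∈ Q(K)} 10|u'|`. -/
def mu (q : ℕ) (E : Finset (ℕ × ℕ × ℕ)) : ℕ :=
  1 + (QK q E).sup (fun u => 10 * u.natAbs)

/-- `A = 5μ + 4`. -/
def Aval (q : ℕ) (E : Finset (ℕ × ℕ × ℕ)) : ℕ := 5 * mu q E + 4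

/-- The path of `σ(K)` has `(2A+1)q - 1` edges; edges are identified with the
integers `0, 1, …, (2A+1)q - 2`. -/
def numEdges (q : ℕ) (E : Finset (ℕ × ℕ × ℕ)) : ℤ := (2 * (Aval q E : ℤ) + 1) * q - 1

/-- The capacity profile of `σ(K)`: within each block of `2A` consecutive edges, the
leftmost `A` edges have capacity `4A + 4` and the rightmost `A` edges have capacity `4A`;
blocks are separated by single edges of capacity `0`. -/
def cap (q : ℕ) (E : Finset (ℕ × ℕ × ℕ)) (e : ℤ) : ℤ :=
  let A : ℤ := (Aval q E : ℤ)
  let r := e % (2 * A + 1)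
  if r < A then 4 * A + 4 else if r < 2 * A then 4 * A else 0

/-- An element `u ∈ X ∪ Y ∪ Z ∪ E` of the 3DM instance. -/
inductive Elem where
  | X : ℕ → Elem
  | Y : ℕ → Elem
  | Z : ℕ → Elem
  | H : ℕ × ℕ × ℕ → Elem
deriving DecidableEq

/-- The number `u' ∈ Q(K)` associated to `u ∈ X ∪ Y ∪ Z ∪ E`. -/
def elemVal (q : ℕ) : Elem → ℤ
  | .X i => xnum q i
  | .Y j => ynum q j
  | .Z k => znum q k
  | .H h => hnum q h

/-- `u` is an actual element of the instance `(q, E)`. -/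
def validElem (q : ℕ) (E : Finset (ℕ × ℕ × ℕ)) : Elem → Prop
  | .X i => i ∈ Finset.Icc 1 q
  | .Y j => j ∈ Finset.Icc 1 q
  | .Z k => k ∈ Finset.Icc 1 q
  | .H h => h ∈ E

/-- A task of `σ(K)` is a pair `(u, s)` with `u ∈ X ∪ Y ∪ Z ∪ E`; `s = true` encodes the
task `t_L(u)` and `s = false` encodes the task `t_R(u)`. All tasks have weight 1. -/
abbrev UTask := Elem × Bool

/-- The length of a task: `t_L(u)` has length `A - 10u'`, `t_R(u)` has length `A + 10u'`. -/
def taskLen (q : ℕ) (E : Finset (ℕ × ℕ × ℕ)) (t : UTask) : ℤ :=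
  if t.2 then (Aval q E : ℤ) - 10 * elemVal q t.1
  else (Aval q E : ℤ) + 10 * elemVal q t.1

/-- The demand of a task: `t_L(u)` has demand `A + 10u' + 1`, `t_R(u)` has demand `A - 10u'`. -/
def taskDem (q : ℕ) (E : Finset (ℕ × ℕ × ℕ)) (t : UTask) : ℤ :=
  if t.2 then (Aval q E : ℤ) + 10 * elemVal q t.1 + 1
  else (Aval q E : ℤ) - 10 * elemVal q t.1

/-- The schedule of task `t`: the contiguous interval of `taskLen` edges starting at
edge `start t`. -/
noncomputable def sched (q : ℕ) (E : Finset (ℕ × ℕ × ℕ)) (start : UTask → ℤ) (t : UTask) : Finset ℤ :=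
  Finset.Ico (start t) (start t + taskLen q E t)

/-- `(S, start)` is a feasible solution of `σ(K)`: every selected task is a task of the
instance, is scheduled (contiguously, with exactly its length) within the path, and on every
edge `e` the total demand of the selected tasks whose schedule contains `e` is at most the
capacity of `e`. -/
def Feasible (q : ℕ) (E : Finset (ℕ × ℕ × ℕ)) (S : Finset UTask) (start : UTask → ℤ) : Prop :=
  (∀ t ∈ S, validElem q E t.1) ∧
  (∀ t ∈ S, 0 ≤ start t ∧ start t + taskLen q E t ≤ numEdges q E) ∧
  (∀ e : ℤ, 0 ≤ e → e < numEdges q E →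
    ∑ t ∈ S.filter (fun t => e ∈ sched q E start t), taskDem q E t ≤ cap q E e)

/-- The first edge of the `b`-th block (`b ∈ {0, …, q-1}`). -/
def blockStart (q : ℕ) (E : Finset (ℕ × ℕ × ℕ)) (b : ℕ) : ℤ :=
  (b : ℤ) * (2 * (Aval q E : ℤ) + 1)

/-- The `b`-th block of `2A` consecutive edges (`b ∈ {0, …, q-1}`). -/
noncomputable def block (q : ℕ) (E : Finset (ℕ × ℕ × ℕ)) (b : ℕ) : Finset ℤ :=
  Finset.Ico (blockStart q E b) (blockStart q E b + 2 * (Aval q E : ℤ))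

lemma elemVal_mem_QK (q : ℕ) (E : Finset (ℕ × ℕ × ℕ)) (u : Elem)
    (hu : validElem q E u) : elemVal q u ∈ QK q E := by
  cases u with
  | X i => simp only [QK, Finset.mem_union]
           exact Or.inl (Or.inl (Or.inl (Finset.mem_image_of_mem _ hu)))
  | Y j => simp only [QK, Finset.mem_union]
           exact Or.inl (Or.inl (Or.inr (Finset.mem_image_of_mem _ hu)))
  | Z k => simp only [QK, Finset.mem_union]
           exact Or.inl (Or.inr (Finset.mem_image_of_mem _ hu))
  | H h => simp only [QK, Finset.mem_union]
           exact Or.inr (Finset.mem_image_of_mem _ hu)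

lemma elemVal_abs_le (q : ℕ) (E : Finset (ℕ × ℕ × ℕ)) (u : Elem)
    (hu : validElem q E u) : 10 * |elemVal q u| ≤ (mu q E : ℤ) - 1 := by
  have h : 10 * (elemVal q u).natAbs ≤ (QK q E).sup (fun u => 10 * u.natAbs) :=
    Finset.le_sup (f := fun u : ℤ => 10 * u.natAbs) (elemVal_mem_QK q E u hu)
  have hmu : mu q E = 1 + (QK q E).sup (fun u => 10 * u.natAbs) := rfl
  rw [Int.abs_eq_natAbs]
  omega

/-- In any feasible solution of `σ(K)`, at most 8 of the selected tasks have their schedule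
contained in any single block. -/
theorem at_most_eight_per_block (q : ℕ) (E : Finset (ℕ × ℕ × ℕ)) (hE : ValidE q E)
    (S : Finset UTask) (start : UTask → ℤ) (hfeas : Feasible q E S start)
    (b : ℕ) (hb : b < q) :
    (S.filter (fun t => sched q E start t ⊆ block q E b)).card ≤ 8 := by
  classical
  obtain ⟨hvalid, hrange, hcap⟩ := hfeas
  set m : ℤ := (mu q E : ℤ) with hm
  set A : ℤ := (Aval q E : ℤ) with hA
  have hm1 : 1 ≤ m := by
    rw [hm]
    exact_mod_cast Nat.le_add_right 1 ((QK q E).sup (fun u => 10 * u.natAbs))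
  have hAm : A = 5 * m + 4 := by
    rw [hA, hm, Aval]; push_cast; ring
  have hq : (b : ℤ) + 1 ≤ (q : ℤ) := by exact_mod_cast hb
  -- bounds for tasks in S
  have habs : ∀ t ∈ S, 10 * |elemVal q t.1| ≤ m - 1 := fun t ht =>
    elemVal_abs_le q E t.1 (hvalid t ht)
  have hdem : ∀ t ∈ S, 4 * m + 5 ≤ taskDem q E t := by
    intro t ht
    have h1 := habs t ht
    have h2 := le_abs_self (elemVal q t.1)
    have h3 := neg_abs_le (elemVal q t.1)
    rcases t with ⟨u, s⟩
    cases s <;> simp only [taskDem] <;> simp <;> rw [← hA] <;>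
      simp only [elemVal] at * <;> linarith
  have hlen : ∀ t ∈ S, 4 * m + 5 ≤ taskLen q E t := by
    intro t ht
    have h1 := habs t ht
    have h2 := le_abs_self (elemVal q t.1)
    have h3 := neg_abs_le (elemVal q t.1)
    rcases t with ⟨u, s⟩
    cases s <;> simp only [taskLen] <;> simp <;> rw [← hA] <;>
      simp only [elemVal] at * <;> linarith
  set B : ℤ := blockStart q E b with hB
  have hBval : B = (b : ℤ) * (2 * A + 1) := rfl
  have hB0 : 0 ≤ B := by
    rw [hBval]; positivity
  set e₁ : ℤ := B + (4 * m + 4) with he₁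
  set e₂ : ℤ := B + (8 * m + 9) with he₂
  -- cap values
  have hmod : ∀ r : ℤ, 0 ≤ r → r < 2 * A + 1 → (B + r) % (2 * A + 1) = r := by
    intro r h0 h1
    rw [hBval, add_comm, Int.add_mul_emod_self_right]
    exact Int.emod_eq_of_lt h0 h1
  have hcap1 : cap q E e₁ = 4 * A + 4 := by
    have : e₁ % (2 * A + 1) = 4 * m + 4 := hmod _ (by linarith) (by linarith)
    simp only [cap, ← hA, this]
    rw [if_pos (by linarith)]
  have hcap2 : cap q E e₂ = 4 * A := by
    have : e₂ % (2 * A + 1) = 8 * m + 9 := hmod _ (by linarith) (by linarith)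
    simp only [cap, ← hA, this]
    rw [if_neg (by linarith), if_pos (by linarith)]
  -- edges in range
  have hnum : numEdges q E = (2 * A + 1) * q - 1 := by
    simp [numEdges, hA]
  have hBle : B ≤ ((q : ℤ) - 1) * (2 * A + 1) := by
    rw [hBval]
    exact mul_le_mul_of_nonneg_right (by linarith) (by linarith)
  have hrange1 : 0 ≤ e₁ ∧ e₁ < numEdges q E := by
    constructor
    · linarith
    · rw [hnum]; nlinarith
  have hrange2 : 0 ≤ e₂ ∧ e₂ < numEdges q E := by
    constructor
    · linarith
    · rw [hnum]; nlinarith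
  -- at most 4 tasks through any in-range edge
  have hfour : ∀ e : ℤ, 0 ≤ e → e < numEdges q E →
      (S.filter (fun t => e ∈ sched q E start t)).card ≤ 4 := by
    intro e h0 h1
    set F := S.filter (fun t => e ∈ sched q E start t) with hF
    have hsum : (F.card : ℤ) * (4 * m + 5) ≤ ∑ t ∈ F, taskDem q E t := by
      have h := Finset.card_nsmul_le_sum F (taskDem q E) (4 * m + 5)
        (fun t ht => hdem t (Finset.mem_of_mem_filter t ht))
      rw [nsmul_eq_mul] at h
      exact h
    have hle := hcap e h0 h1
    have hcaple : cap q E e ≤ 4 * A + 4 := by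
      simp only [cap, ← hA]
      split_ifs <;> linarith
    by_contra hcon
    push_neg at hcon
    have h5 : (5 : ℤ) ≤ (F.card : ℤ) := by exact_mod_cast hcon
    nlinarith
  -- every task in the block covers e₁ or e₂
  have hsub : S.filter (fun t => sched q E start t ⊆ block q E b) ⊆
      (S.filter (fun t => e₁ ∈ sched q E start t)) ∪
      (S.filter (fun t => e₂ ∈ sched q E start t)) := by
    intro t ht
    rw [Finset.mem_filter] at ht
    obtain ⟨htS, htsub⟩ := ht
    have hL := hlen t htS
    set s := start t with hs
    set L := taskLen q E t with hLdef
    have hmem1 : s ∈ sched q E start t := by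
      simp [sched, ← hs, ← hLdef]; linarith
    have hmem2 : s + L - 1 ∈ sched q E start t := by
      simp [sched, ← hs, ← hLdef]; linarith
    have hb1 := htsub hmem1
    have hb2 := htsub hmem2
    simp only [block, Finset.mem_Ico, ← hB, ← hA] at hb1 hb2
    rw [Finset.mem_union, Finset.mem_filter, Finset.mem_filter]
    by_cases hcase : s ≤ e₁
    · left
      refine ⟨htS, ?_⟩
      simp [sched, ← hs, ← hLdef]
      exact ⟨hcase, by linarith⟩
    · right
      push_neg at hcase
      refine ⟨htS, ?_⟩
      simp [sched, ← hs, ← hLdef]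
      constructor
      · linarith
      · linarith
  calc (S.filter (fun t => sched q E start t ⊆ block q E b)).card
      ≤ ((S.filter (fun t => e₁ ∈ sched q E start t)) ∪
         (S.filter (fun t => e₂ ∈ sched q E start t))).card := Finset.card_le_card hsub
    _ ≤ (S.filter (fun t => e₁ ∈ sched q E start t)).card +
        (S.filter (fun t => e₂ ∈ sched q E start t)).card := Finset.card_union_le _ _
    _ ≤ 4 + 4 := Nat.add_le_add (hfour e₁ hrange1.1 hrange1.2) (hfour e₂ hrange2.1 hrange2.2)
    _ = 8 := rfl
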